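/- Let F(x) = P₁(x) + δ_{g(·)≤0}(x) with g(x) = (l₁(A₁x), …, l_m(A_m x)), where P₁ is convex continuous, each A_i ∈ ℝ^{q_i × n}, each l_i: ℝ^{q_i} → ℝ is strictly convex, and {x : g(x) ≤ 0} ≠ ∅. Let x̄ ∈ Argmin F and suppose: (i) there exists a Lagrange multiplier λ̄ ∈ ℝ₊ᵐ for the problem of minimizing P₁ subject to g(x) ≤ 0 (i.e., inf_x {P₁(x) + ⟨λ̄, g(x)⟩} = inf F > −∞), and the function x ↦ P₁(x) + ⟨λ̄, g(x)⟩ is a KL function with exponent α ∈ (0,1); (ii) strict complementarity holds at (x̄, λ̄), i.e., for every i with λ̄_i = 0 one has l_i(A_i x̄) < 0. Then F satisfies the KL property with exponent α at x̄. -/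

import Mathlib

set_option maxHeartbeats 1000000


open Set Filter Topology Metric Bornology RealInnerProductSpace
open scoped Classical

noncomputable section

abbrev Euc (n : ℕ) : Type := EuclideanSpace ℝ (Fin n)

/-- Convex subdifferential of a real-valued function on an inner product space. -/
def ConvexSubdiff {H : Type*} [NormedAddCommGroup H] [InnerProductSpace ℝ H]
    (P : H → ℝ) (x : H) : Set H :=
  {ζ | ∀ y, ⟪ζ, y - x⟫ ≤ P y - P x}

/-- Regular (Fréchet) subdifferential of an extended-real-valued function. -/
def RegularSubdiff {H : Type*} [NormedAddCommGroup H] [InnerProductSpace ℝ H]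
    (h : H → EReal) (x : H) : Set H :=
  {ζ | h x ≠ ⊤ ∧ h x ≠ ⊥ ∧ ∀ ε : ℝ, 0 < ε →
    ∀ᶠ z in 𝓝 x,
      (((h x).toReal + ⟪ζ, z - x⟫ - ε * ‖z - x‖ : ℝ) : EReal) ≤ h z}

/-- Limiting (Mordukhovich) subdifferential. -/
def LimSubdiff {H : Type*} [NormedAddCommGroup H] [InnerProductSpace ℝ H]
    (h : H → EReal) (x : H) : Set H :=
  {ζ | ∃ xs ζs : ℕ → H, (∀ k, ζs k ∈ RegularSubdiff h (xs k)) ∧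
    Tendsto xs atTop (𝓝 x) ∧ Tendsto (fun k => h (xs k)) atTop (𝓝 (h x)) ∧
    Tendsto ζs atTop (𝓝 ζ)}

/-- The Kurdyka–Łojasiewicz property with exponent `α` at a point. -/
def KLExpAt {H : Type*} [NormedAddCommGroup H] [InnerProductSpace ℝ H]
    (h : H → EReal) (α : ℝ) (xhat : H) : Prop :=
  ∃ a₀ : ℝ, 0 < a₀ ∧ ∃ a : ℝ, 0 < a ∧ ∃ V ∈ 𝓝 xhat, ∀ x ∈ V,
    h xhat < h x → h x < h xhat + (a : EReal) →
    1 ≤ a₀ * (1 - α) * ((h x).toReal - (h xhat).toReal) ^ (-α) *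
        infDist 0 (LimSubdiff h x)

/-- The general Kurdyka–Łojasiewicz property at a point. -/
def KLAt {H : Type*} [NormedAddCommGroup H] [InnerProductSpace ℝ H]
    (h : H → EReal) (xhat : H) : Prop :=
  ∃ a : ℝ, 0 < a ∧ ∃ V ∈ 𝓝 xhat, ∃ φ φ' : ℝ → ℝ,
    φ 0 = 0 ∧ ContinuousOn φ (Ico 0 a) ∧ ConcaveOn ℝ (Ico 0 a) φ ∧
    (∀ s ∈ Ioo 0 a, HasDerivAt φ (φ' s) s ∧ 0 < φ' s) ∧
    ∀ x ∈ V, h xhat < h x → h x < h xhat + (a : EReal) →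
      1 ≤ φ' ((h x).toReal - (h xhat).toReal) * infDist 0 (LimSubdiff h x)

/-- The extended objective of problem (P). -/
def Fobj {n m : ℕ} (f P1 P2 : Euc n → ℝ) (g : Fin m → Euc n → ℝ) (x : Euc n) : EReal :=
  if ∀ i, g i x ≤ 0 then ((f x + P1 x - P2 x : ℝ) : EReal) else ⊤

/-- The moving balls constraint functions. -/
def barG {n m : ℕ} (g : Fin m → Euc n → ℝ) (g' : Fin m → Euc n → Euc n)
    (x y : Euc n) (w : EuclideanSpace ℝ (Fin m)) (i : Fin m) : ℝ :=
  g i y + ⟪g' i y, x - y⟫ + w i / 2 * ‖x - y‖ ^ 2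

/-- The space `ℝⁿ × ℝⁿ × ℝᵐ` with the (L²) Euclidean inner product. -/
abbrev PS (n m : ℕ) : Type :=
  WithLp 2 (Euc n × WithLp 2 (Euc n × EuclideanSpace ℝ (Fin m)))

/-- The potential function `bar F`. -/
def barF {n m : ℕ} (f P1 P2 : Euc n → ℝ) (g : Fin m → Euc n → ℝ)
    (g' : Fin m → Euc n → Euc n)
    (p : PS n m) : EReal :=
  if ∀ i, barG g g' p.ofLp.1 p.ofLp.2.ofLp.1 p.ofLp.2.ofLp.2 i ≤ 0 then
    ((f p.ofLp.1 + P1 p.ofLp.1 - P2 p.ofLp.1 : ℝ) : EReal) else ⊤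

/-- Stationary points of problem (P). -/
def IsStationaryPt {n m : ℕ} (f P1 P2 : Euc n → ℝ) (f' : Euc n → Euc n)
    (g : Fin m → Euc n → ℝ) (g' : Fin m → Euc n → Euc n) (x : Euc n) : Prop :=
  (∀ i, g i x ≤ 0) ∧ ∃ lam : Fin m → ℝ, (∀ i, 0 ≤ lam i) ∧
    (∀ i, lam i * g i x = 0) ∧
    ∃ u ∈ ConvexSubdiff P1 x, ∃ v ∈ ConvexSubdiff P2 x,
      f' x + u - v + ∑ i, lam i • g' i x = 0

/-- Assumptions A (smoothness, Lipschitz gradients, level-boundedness) and B (MFCQ). -/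
def AssumptionAB {n m : ℕ} (f P1 P2 : Euc n → ℝ) (f' : Euc n → Euc n)
    (g : Fin m → Euc n → ℝ) (g' : Fin m → Euc n → Euc n)
    (Lf : ℝ) (Lg : Fin m → ℝ) : Prop :=
  (∀ x, HasGradientAt f (f' x) x) ∧ LipschitzWith Lf.toNNReal f' ∧
  ConvexOn ℝ univ P1 ∧ Continuous P1 ∧ ConvexOn ℝ univ P2 ∧ Continuous P2 ∧
  (∀ i x, HasGradientAt (g i) (g' i x) x) ∧
  (∀ i, LipschitzWith (Lg i).toNNReal (g' i)) ∧
  {x : Euc n | ∀ i, g i x ≤ 0}.Nonempty ∧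
  (∀ σ : ℝ, IsBounded {x | Fobj f P1 P2 g x ≤ (σ : EReal)}) ∧
  (∀ x : Euc n, (∀ i, g i x ≤ 0) → ∃ d, ∀ i, g i x = 0 → ⟪g' i x, d⟫ < 0)

/-- The sequences generated by the SCP_ls algorithm. -/
structure SCPlsSeq {n m : ℕ} (f P1 P2 : Euc n → ℝ) (f' : Euc n → Euc n)
    (g : Fin m → Euc n → ℝ) (g' : Fin m → Euc n → Euc n)
    (c Llo : ℝ) (x ξ : ℕ → Euc n) (Lfs : ℕ → ℝ)
    (Lgs : ℕ → EuclideanSpace ℝ (Fin m)) : Prop where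
  feas0 : ∀ i, g i (x 0) ≤ 0
  subgrad : ∀ t, ξ t ∈ ConvexSubdiff P2 (x t)
  Lf_lb : ∀ t, Llo ≤ Lfs t
  Lg_lb : ∀ t i, Llo ≤ Lgs t i
  bdd : ∃ M : ℝ, ∀ t, Lfs t ≤ M ∧ ∀ i, Lgs t i ≤ M
  feas_sub : ∀ t i, barG g g' (x (t + 1)) (x t) (Lgs t) i ≤ 0
  min : ∀ t z, (∀ i, barG g g' z (x t) (Lgs t) i ≤ 0) →
    ⟪f' (x t) - ξ t, x (t + 1) - x t⟫ + Lfs t / 2 * ‖x (t + 1) - x t‖ ^ 2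
        + P1 (x (t + 1))
      ≤ ⟪f' (x t) - ξ t, z - x t⟫ + Lfs t / 2 * ‖z - x t‖ ^ 2 + P1 z
  uniq : ∀ t z, (∀ i, barG g g' z (x t) (Lgs t) i ≤ 0) →
    ⟪f' (x t) - ξ t, z - x t⟫ + Lfs t / 2 * ‖z - x t‖ ^ 2 + P1 z
      ≤ ⟪f' (x t) - ξ t, x (t + 1) - x t⟫ + Lfs t / 2 * ‖x (t + 1) - x t‖ ^ 2
        + P1 (x (t + 1)) → z = x (t + 1)
  feas : ∀ t i, g i (x (t + 1)) ≤ 0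
  descent : ∀ t, f (x (t + 1)) + P1 (x (t + 1)) - P2 (x (t + 1)) ≤
    f (x t) + P1 (x t) - P2 (x t) - c / 2 * ‖x (t + 1) - x t‖ ^ 2

/-- Cluster points of a sequence (limits of subsequences). -/
def seqClusterPts {X : Type*} [TopologicalSpace X] (u : ℕ → X) : Set X :=
  {p | ∃ φ : ℕ → ℕ, StrictMono φ ∧ Tendsto (u ∘ φ) atTop (𝓝 p)}

section HB
variable {n : ℕ}

lemma lin_decomp (f : (Euc n × ℝ) →L[ℝ] ℝ) (y : Euc n) (s : ℝ) :
    f (y, s) = f (y, 0) + s * f (0, 1) := by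
  have h1 : (y, s) = (y, (0:ℝ)) + s • ((0 : Euc n), (1:ℝ)) := by
    simp [Prod.ext_iff]
  rw [h1, map_add, map_smul]
  simp [smul_eq_mul]

lemma epi_open {φ : Euc n → ℝ} (hcont : Continuous φ) :
    IsOpen {p : Euc n × ℝ | φ p.1 < p.2} :=
  isOpen_lt (hcont.comp continuous_fst) continuous_snd

lemma epi_convex {φ : Euc n → ℝ} (hconv : ConvexOn ℝ univ φ) :
    Convex ℝ {p : Euc n × ℝ | φ p.1 < p.2} := by
  rintro ⟨p1, p2⟩ hp ⟨q1, q2⟩ hq a b ha hb hab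
  simp only [mem_setOf_eq] at *
  have h := hconv.2 (mem_univ p1) (mem_univ q1) ha hb hab
  have key : a * φ p1 + b * φ q1 < a * p2 + b * q2 := by
    rcases ha.lt_or_eq with ha' | ha'
    · exact add_lt_add_of_lt_of_le (by nlinarith) (by nlinarith)
    · have hb1 : b = 1 := by linarith
      have ha0 : a = 0 := ha'.symm
      rw [ha0, hb1]; simpa using hq
  calc φ (a • p1 + b • q1) ≤ a * φ p1 + b * φ q1 := by simpa using h
    _ < a * p2 + b * q2 := key

/-- From a separating functional on `Euc n × ℝ` with negative vertical component,
extract a subgradient-type vector. -/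
lemma extract_vec (f : (Euc n × ℝ) →L[ℝ] ℝ) :
    ∃ v : Euc n, ∀ y : Euc n, ⟪v, y⟫ = f (y, 0) := by
  refine ⟨(InnerProductSpace.toDual ℝ (Euc n)).symm
    (f.comp (ContinuousLinearMap.inl ℝ (Euc n) ℝ)), fun y => ?_⟩
  rw [InnerProductSpace.toDual_symm_apply]
  rfl

lemma le_of_forall_add_neg {A B c : ℝ} (hc : c < 0)
    (h : ∀ δ : ℝ, 0 < δ → A + δ * c < B) : A ≤ B := by
  by_contra hcon
  push_neg at hcon
  have hδpos : 0 < (A - B) / (-c) / 2 :=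
    div_pos (div_pos (by linarith) (by linarith)) two_pos
  have h2 := h _ hδpos
  have h3 : (A - B) / (-c) / 2 * c = -(A - B) / 2 := by
    rw [div_div, div_mul_eq_mul_div, div_eq_div_iff (by nlinarith) (by norm_num)]
    ring
  linarith

lemma exists_subgrad (φ : Euc n → ℝ) (hconv : ConvexOn ℝ univ φ)
    (hcont : Continuous φ) (x : Euc n) : ∃ u, u ∈ ConvexSubdiff φ x := by
  obtain ⟨f, hf⟩ := geometric_hahn_banach_open_point (epi_convex hconv)
    (epi_open hcont) (show (x, φ x) ∉ {p : Euc n × ℝ | φ p.1 < p.2} by simp)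
  obtain ⟨v, hv⟩ := extract_vec f
  set c := f (0, 1) with hc
  have hdec : ∀ y s, f (y, s) = ⟪v, y⟫ + s * c := by
    intro y s; rw [lin_decomp, hv]
  have hcneg : c < 0 := by
    have h1 := hf (x, φ x + 1) (by simp)
    rw [hdec, hdec] at h1
    linarith
  have hkey : ∀ y, ⟪v, y⟫ + φ y * c ≤ ⟪v, x⟫ + φ x * c := by
    intro y
    apply le_of_forall_add_neg hcneg
    intro δ hδ
    have h1 := hf (y, φ y + δ) (by simp [hδ])
    rw [hdec, hdec] at h1
    nlinarith [h1]
  refine ⟨(-c)⁻¹ • v, fun y => ?_⟩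
  have h3 := hkey y
  have h4 : ⟪v, y - x⟫ ≤ (-c) * (φ y - φ x) := by
    rw [inner_sub_right]; nlinarith
  rw [real_inner_smul_left]
  have hpos : (0:ℝ) < -c := by linarith
  calc (-c)⁻¹ * ⟪v, y - x⟫ ≤ (-c)⁻¹ * ((-c) * (φ y - φ x)) :=
        mul_le_mul_of_nonneg_left h4 (by positivity)
    _ = φ y - φ x := by
        rw [← mul_assoc, inv_mul_cancel₀ hpos.ne', one_mul]

lemma exists_small_subgrad (φ : Euc n → ℝ) (hconv : ConvexOn ℝ univ φ)
    (hcont : Continuous φ) (w : Euc n) (μ : ℝ) (hμ : 0 ≤ μ)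
    (hmin : ∀ y, φ w ≤ φ y + μ * ‖y - w‖) :
    ∃ ζ ∈ ConvexSubdiff φ w, ‖ζ‖ ≤ μ := by
  set B : Set (Euc n × ℝ) := {p | p.2 ≤ φ w - μ * ‖p.1 - w‖} with hBdef
  have hBconv : Convex ℝ B := by
    rintro ⟨p1, p2⟩ hp ⟨q1, q2⟩ hq a b ha hb hab
    simp only [hBdef, mem_setOf_eq] at *
    have hnorm : ‖a • p1 + b • q1 - w‖ ≤ a * ‖p1 - w‖ + b * ‖q1 - w‖ := by
      have hid : a • (p1 - w) + b • (q1 - w) = a • p1 + b • q1 - (a + b) • w := by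
        module
      rw [hab, one_smul] at hid
      rw [← hid]
      calc ‖a • (p1 - w) + b • (q1 - w)‖ ≤ ‖a • (p1 - w)‖ + ‖b • (q1 - w)‖ :=
            norm_add_le _ _
        _ = a * ‖p1 - w‖ + b * ‖q1 - w‖ := by
            rw [norm_smul, norm_smul, Real.norm_eq_abs, Real.norm_eq_abs,
              abs_of_nonneg ha, abs_of_nonneg hb]
    have hm := mul_le_mul_of_nonneg_left hnorm hμ
    show (a • (p1, p2) + b • (q1, q2)).2 ≤ φ w - μ * ‖(a • (p1, p2) + b • (q1, q2)).1 - w‖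
    simp only [Prod.smul_mk, Prod.mk_add_mk, smul_eq_mul]
    have hsum : a * φ w + b * φ w = φ w := by rw [← add_mul, hab, one_mul]
    nlinarith [mul_le_mul_of_nonneg_left hp ha, mul_le_mul_of_nonneg_left hq hb, hsum, hm]
  have hdisj : Disjoint {p : Euc n × ℝ | φ p.1 < p.2} B := by
    rw [disjoint_left]
    rintro ⟨p1, p2⟩ hp hB
    simp only [hBdef, mem_setOf_eq] at hp hB
    have := hmin p1
    nlinarith
  obtain ⟨f, u, hfu, hub⟩ := geometric_hahn_banach_open (epi_convex hconv)
    (epi_open hcont) hBconv hdisj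
  obtain ⟨v, hv⟩ := extract_vec f
  set c := f (0, 1) with hc
  have hdec : ∀ y s, f (y, s) = ⟪v, y⟫ + s * c := by
    intro y s; rw [lin_decomp, hv]
  have hwB : ((w, φ w) : Euc n × ℝ) ∈ B := by simp [hBdef]
  have hcneg : c < 0 := by
    have h1 := (hfu (w, φ w + 1) (by simp)).trans_le (hub _ hwB)
    rw [hdec, hdec] at h1
    linarith
  have hkey : ∀ y, ⟪v, y⟫ + φ y * c ≤ ⟪v, w⟫ + φ w * c := by
    intro y
    apply le_of_forall_add_neg hcneg
    intro δ hδ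
    have h1 := (hfu (y, φ y + δ) (by simp [hδ])).trans_le (hub _ hwB)
    rw [hdec, hdec] at h1
    nlinarith [h1]
  have hnormbd : ∀ y, ⟪v, w - y⟫ ≤ (-c) * μ * ‖y - w‖ := by
    intro y
    have hyB : ((y, φ w - μ * ‖y - w‖) : Euc n × ℝ) ∈ B := by simp [hBdef]
    have hδ : ∀ δ : ℝ, 0 < δ →
        ⟪v, w⟫ + (φ w + δ) * c < ⟪v, y⟫ + (φ w - μ * ‖y - w‖) * c := by
      intro δ hδ
      have h1 := (hfu (w, φ w + δ) (by simp [hδ])).trans_le (hub _ hyB)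
      rw [hdec, hdec] at h1
      exact h1
    have h2 : ⟪v, w⟫ + φ w * c ≤ ⟪v, y⟫ + (φ w - μ * ‖y - w‖) * c := by
      apply le_of_forall_add_neg hcneg
      intro δ hδ'
      have h1 := hδ δ hδ'
      nlinarith [h1]
    rw [inner_sub_right]
    nlinarith
  have hpos : (0:ℝ) < -c := by linarith
  refine ⟨(-c)⁻¹ • v, fun y => ?_, ?_⟩
  · have h3 := hkey y
    have h4 : ⟪v, y - w⟫ ≤ -c * (φ y - φ w) := by
      rw [inner_sub_right]; nlinarith
    rw [real_inner_smul_left]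
    calc (-c)⁻¹ * ⟪v, y - w⟫ ≤ (-c)⁻¹ * ((-c) * (φ y - φ w)) :=
          mul_le_mul_of_nonneg_left h4 (by positivity)
      _ = φ y - φ w := by
          rw [← mul_assoc, inv_mul_cancel₀ hpos.ne', one_mul]
  · have hvb : ∀ d : Euc n, ⟪v, d⟫ ≤ (-c) * μ * ‖d‖ := by
      intro d
      have := hnormbd (w - d)
      simpa [norm_sub_rev] using this
    have h5 : ‖v‖ ≤ (-c) * μ := by
      rcases eq_or_ne v 0 with hv0 | hv0
      · rw [hv0, norm_zero]; exact mul_nonneg hpos.le hμ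
      · have := hvb v
        rw [real_inner_self_eq_norm_sq] at this
        have hnv : 0 < ‖v‖ := norm_pos_iff.mpr hv0
        nlinarith
    rw [norm_smul, Real.norm_eq_abs, abs_of_nonneg (by positivity : (0:ℝ) ≤ (-c)⁻¹)]
    calc (-c)⁻¹ * ‖v‖ ≤ (-c)⁻¹ * ((-c) * μ) := mul_le_mul_of_nonneg_left h5 (by positivity)
      _ = μ := by rw [← mul_assoc, inv_mul_cancel₀ hpos.ne', one_mul]

end HB

section Subdiff
variable {n : ℕ} {φ : Euc n → ℝ} {p : Euc n → Prop} {h : Euc n → EReal}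

lemma regular_subset (hpc : Convex ℝ {z | p z}) (hφ : ConvexOn ℝ univ φ)
    (hh1 : ∀ z, p z → h z = ((φ z : ℝ) : EReal)) (hh2 : ∀ z, ¬ p z → h z = ⊤)
    {x ζ : Euc n} (hζ : ζ ∈ RegularSubdiff h x) :
    p x ∧ ∀ y, p y → ⟪ζ, y - x⟫ ≤ φ y - φ x := by
  obtain ⟨hne1, _, hev⟩ := hζ
  have hpx : p x := by
    by_contra hpx
    rw [hh2 x hpx] at hne1
    exact hne1 rfl
  have hxval : (h x).toReal = φ x := by rw [hh1 x hpx, EReal.toReal_coe]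
  refine ⟨hpx, fun y hpy => ?_⟩
  rcases eq_or_ne y x with rfl | hyx
  · simp
  have hny : 0 < ‖y - x‖ := by
    rw [norm_pos_iff, sub_ne_zero]; exact hyx
  have key : ∀ ε : ℝ, 0 < ε → ⟪ζ, y - x⟫ ≤ φ y - φ x + ε * ‖y - x‖ := by
    intro ε hε
    obtain ⟨δ, hδ, hball⟩ := Metric.eventually_nhds_iff.mp (hev ε hε)
    set t : ℝ := min (δ / (2 * ‖y - x‖)) 1 with htdef
    have ht0 : 0 < t := lt_min (by positivity) one_pos
    have ht1 : t ≤ 1 := min_le_right _ _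
    set z : Euc n := x + t • (y - x) with hzdef
    have hz2 : z = (1 - t) • x + t • y := by rw [hzdef]; module
    have hdz : dist z x < δ := by
      rw [dist_eq_norm, hzdef, add_sub_cancel_left, norm_smul, Real.norm_eq_abs,
        abs_of_pos ht0]
      calc t * ‖y - x‖ ≤ δ / (2 * ‖y - x‖) * ‖y - x‖ :=
            mul_le_mul_of_nonneg_right (min_le_left _ _) (norm_nonneg _)
        _ = δ / 2 := by field_simp
        _ < δ := by linarith
    have hpz : p z := by
      rw [hz2]
      exact hpc hpx hpy (by linarith) ht0.le (by ring)
    have h1 := hball hdz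
    rw [hh1 z hpz, hxval] at h1
    have h1' : φ x + ⟪ζ, z - x⟫ - ε * ‖z - x‖ ≤ φ z := by
      exact_mod_cast h1
    have hzx : z - x = t • (y - x) := by rw [hzdef]; abel
    rw [hzx, real_inner_smul_right, norm_smul, Real.norm_eq_abs, abs_of_pos ht0] at h1'
    have hconv2 : φ z ≤ (1 - t) * φ x + t * φ y := by
      rw [hz2]
      simpa using hφ.2 (mem_univ x) (mem_univ y) (by linarith) ht0.le (by ring)
    have h2 : t * ⟪ζ, y - x⟫ - ε * (t * ‖y - x‖) ≤ t * (φ y - φ x) := by nlinarith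
    have h3 := (mul_le_mul_iff_right₀ ht0).mp (by nlinarith : t * (⟪ζ, y - x⟫ - ε * ‖y - x‖) ≤ t * (φ y - φ x + 0))
    nlinarith
  by_contra hcon
  push_neg at hcon
  have := key ((⟪ζ, y - x⟫ - (φ y - φ x)) / (2 * ‖y - x‖))
    (div_pos (by linarith) (by positivity))
  have he : (⟪ζ, y - x⟫ - (φ y - φ x)) / (2 * ‖y - x‖) * ‖y - x‖
      = (⟪ζ, y - x⟫ - (φ y - φ x)) / 2 := by field_simp
  linarith

lemma lim_subset (hpc : Convex ℝ {z | p z}) (hpcl : IsClosed {z | p z})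
    (hφ : ConvexOn ℝ univ φ) (hφc : Continuous φ)
    (hh1 : ∀ z, p z → h z = ((φ z : ℝ) : EReal)) (hh2 : ∀ z, ¬ p z → h z = ⊤)
    {x ζ : Euc n} (hζ : ζ ∈ LimSubdiff h x) :
    p x ∧ ∀ y, p y → ⟪ζ, y - x⟫ ≤ φ y - φ x := by
  obtain ⟨xs, ζs, hreg, hxs, _, hζs⟩ := hζ
  have hstep := fun k => regular_subset hpc hφ hh1 hh2 (hreg k)
  have hpx : p x := hpcl.mem_of_tendsto hxs (Eventually.of_forall fun k => (hstep k).1)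
  refine ⟨hpx, fun y hpy => ?_⟩
  have hlim1 : Tendsto (fun k => ⟪ζs k, y - xs k⟫) atTop (𝓝 ⟪ζ, y - x⟫) :=
    hζs.inner (tendsto_const_nhds.sub hxs)
  have hlim2 : Tendsto (fun k => φ y - φ (xs k)) atTop (𝓝 (φ y - φ x)) :=
    tendsto_const_nhds.sub ((hφc.continuousAt.tendsto).comp hxs)
  exact le_of_tendsto_of_tendsto' hlim1 hlim2 fun k => (hstep k).2 y hpy

lemma conv_to_lim (hh1 : ∀ z, p z → h z = ((φ z : ℝ) : EReal))
    (hh2 : ∀ z, ¬ p z → h z = ⊤)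
    {x ζ : Euc n} (hpx : p x) (hsub : ∀ y, p y → ⟪ζ, y - x⟫ ≤ φ y - φ x) :
    ζ ∈ LimSubdiff h x := by
  have hreg : ζ ∈ RegularSubdiff h x := by
    refine ⟨by rw [hh1 x hpx]; exact EReal.coe_ne_top _,
      by rw [hh1 x hpx]; exact EReal.coe_ne_bot _, fun ε hε => ?_⟩
    refine Eventually.of_forall fun z => ?_
    rw [hh1 x hpx, EReal.toReal_coe]
    by_cases hpz : p z
    · rw [hh1 z hpz]
      have h1 := hsub z hpz
      have h2 : 0 ≤ ε * ‖z - x‖ := by positivity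
      exact_mod_cast (by linarith : φ x + ⟪ζ, z - x⟫ - ε * ‖z - x‖ ≤ φ z)
    · rw [hh2 z hpz]; exact le_top
  exact ⟨fun _ => x, fun _ => ζ, fun _ => hreg, tendsto_const_nhds,
    tendsto_const_nhds, tendsto_const_nhds⟩

end Subdiff

section EB
variable {n : ℕ}

def iterSeq {E : Type*} (f : ℕ → E → E) (x : E) : ℕ → E := fun k => Nat.rec x f k

lemma iterSeq_succ {E : Type*} (f : ℕ → E → E) (x : E) (k : ℕ) :
    iterSeq f x (k + 1) = f k (iterSeq f x k) := rfl

lemma norm_convex_aux (u : Euc n) (μ : ℝ) (hμ : 0 ≤ μ) :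
    ConvexOn ℝ univ (fun z : Euc n => μ * ‖z - u‖) := by
  refine ⟨convex_univ, fun p _ q _ a b ha hb hab => ?_⟩
  simp only
  have hid : a • (p - u) + b • (q - u) = a • p + b • q - (a + b) • u := by module
  rw [hab, one_smul] at hid
  have hnorm : ‖a • p + b • q - u‖ ≤ a * ‖p - u‖ + b * ‖q - u‖ := by
    rw [← hid]
    calc ‖a • (p - u) + b • (q - u)‖ ≤ ‖a • (p - u)‖ + ‖b • (q - u)‖ := norm_add_le _ _
      _ = a * ‖p - u‖ + b * ‖q - u‖ := by
          rw [norm_smul, norm_smul, Real.norm_eq_abs, Real.norm_eq_abs,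
            abs_of_nonneg ha, abs_of_nonneg hb]
  calc μ * ‖a • p + b • q - u‖ ≤ μ * (a * ‖p - u‖ + b * ‖q - u‖) :=
        mul_le_mul_of_nonneg_left hnorm hμ
    _ = a • (μ * ‖p - u‖) + b • (μ * ‖q - u‖) := by simp [smul_eq_mul]; ring

lemma error_bound (φ : Euc n → ℝ) (hconv : ConvexOn ℝ univ φ) (hcont : Continuous φ)
    (xbar : Euc n) (φmin : ℝ) (hmin : ∀ z, φmin ≤ φ z)
    (α c a ρ' : ℝ) (hα0 : 0 < α) (hα1 : α < 1) (hc : 0 < c)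
    (hKLb : ∀ w, ‖w - xbar‖ ≤ ρ' → 0 < φ w - φmin → φ w - φmin < a →
      ∀ ζ ∈ ConvexSubdiff φ w, c * (φ w - φmin) ^ α ≤ ‖ζ‖)
    (x : Euc n) (ρ₀ : ℝ) (hx : ‖x - xbar‖ ≤ ρ₀)
    (ht0 : 0 < φ x - φmin) (hta : φ x - φmin < a)
    (hsafe : ρ₀ + (2:ℝ) ^ α / c * (φ x - φmin) ^ (1 - α) * (1 - (2:ℝ) ^ (α - 1))⁻¹ ≤ ρ') :
    ∃ y, φ y = φmin ∧
      ‖x - y‖ ≤ (2:ℝ) ^ α / c * (φ x - φmin) ^ (1 - α) * (1 - (2:ℝ) ^ (α - 1))⁻¹ := by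
  set t0 : ℝ := φ x - φmin with ht0def
  set θ : ℝ := (2:ℝ) ^ (α - 1) with hθdef
  have hθ0 : 0 < θ := Real.rpow_pos_of_pos two_pos _
  have hθ1 : θ < 1 := Real.rpow_lt_one_of_one_lt_of_neg one_lt_two (by linarith)
  set B : ℝ := (2:ℝ) ^ α / c * t0 ^ (1 - α) with hBdef
  have hB0 : 0 < B :=
    mul_pos (div_pos (Real.rpow_pos_of_pos two_pos _) hc) (Real.rpow_pos_of_pos ht0 _)
  set T : ℕ → ℝ := fun k => t0 * (2:ℝ)⁻¹ ^ k with hTdef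
  have hT0 : ∀ k, 0 < T k := fun k => mul_pos ht0 (by positivity)
  have hTle : ∀ k, T k ≤ t0 := by
    intro k
    have : (2:ℝ)⁻¹ ^ k ≤ 1 := pow_le_one₀ (by norm_num) (by norm_num)
    calc T k = t0 * (2:ℝ)⁻¹ ^ k := rfl
      _ ≤ t0 * 1 := mul_le_mul_of_nonneg_left this ht0.le
      _ = t0 := mul_one _
  have h2k : ∀ k : ℕ, ((2:ℝ)⁻¹) ^ k = (2:ℝ) ^ (-(k : ℝ)) := by
    intro k
    rw [← Real.rpow_neg_one (2:ℝ), ← Real.rpow_natCast ((2:ℝ) ^ (-1:ℝ)) k,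
      ← Real.rpow_mul (by norm_num)]
    norm_num
  have hgeo : ∀ k, ∑ j ∈ Finset.range k, θ ^ j ≤ (1 - θ)⁻¹ := by
    intro k
    rw [geom_sum_eq hθ1.ne, show θ ^ k - 1 = -(1 - θ ^ k) by ring,
      show θ - 1 = -(1 - θ) by ring, neg_div_neg_eq, ← one_div]
    rw [div_le_div_iff_of_pos_right (by linarith : (0:ℝ) < 1 - θ)]
    nlinarith [pow_nonneg hθ0.le k]
  have hθk : ∀ k : ℕ, θ ^ k = (2:ℝ) ^ ((α - 1) * (k:ℝ)) := by
    intro k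
    rw [hθdef, ← Real.rpow_natCast ((2:ℝ) ^ (α-1)) k, ← Real.rpow_mul (by norm_num)]
  have hstepval : ∀ k : ℕ, T k / (c * (T (k+1)) ^ α) = B * θ ^ k := by
    intro k
    have hTk1 : T (k+1) = t0 * (2:ℝ) ^ (-((k:ℝ)+1)) := by
      rw [hTdef]; simp only [h2k (k+1)]; push_cast; ring_nf
    have hFk : (T (k+1)) ^ α = t0 ^ α * (2:ℝ) ^ (-((k:ℝ)+1) * α) := by
      rw [hTk1, Real.mul_rpow ht0.le (Real.rpow_nonneg (by norm_num) _),
        ← Real.rpow_mul (by norm_num)]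
    have e1 : t0 ^ (1-α) * t0 ^ α = t0 := by
      rw [← Real.rpow_add ht0]; norm_num
    have e2 : (2:ℝ)^α * ((2:ℝ)^((α-1)*(k:ℝ)) * (2:ℝ)^(-((k:ℝ)+1)*α)) = (2:ℝ)^(-(k:ℝ)) := by
      rw [← Real.rpow_add two_pos, ← Real.rpow_add two_pos]; congr 1; ring
    have hTkval : T k = t0 * (2:ℝ) ^ (-(k:ℝ)) := by
      rw [hTdef]; simp only [h2k k]
    rw [hTkval, hFk, hθk k, hBdef]
    have hden : c * (t0^α * (2:ℝ)^(-((k:ℝ)+1)*α)) ≠ 0 := by positivity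
    rw [div_eq_iff hden]
    have key : (2:ℝ)^α/c*t0^(1-α)*(2:ℝ)^((α-1)*(k:ℝ))*(c*(t0^α*(2:ℝ)^(-((k:ℝ)+1)*α)))
        = (t0^(1-α)*t0^α)*((2:ℝ)^α*((2:ℝ)^((α-1)*(k:ℝ))*(2:ℝ)^(-((k:ℝ)+1)*α))) := by
      field_simp
    rw [key, e1, e2]
  set Inv : ℕ → Euc n → Prop := fun k u =>
    φ u - φmin ≤ T k ∧ ‖u - xbar‖ ≤ ρ₀ + B * ∑ j ∈ Finset.range k, θ ^ j with hInvdef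
  have hstep : ∀ k u, Inv k u → ∃ w, Inv (k+1) w ∧ ‖w - u‖ ≤ B * θ ^ k := by
    intro k u hu
    obtain ⟨hu1, hu2⟩ := hu
    have hθkpos : 0 < θ ^ k := pow_pos hθ0 k
    have hsum_mono : ρ₀ + B * ∑ j ∈ Finset.range k, θ ^ j
        ≤ ρ₀ + B * ∑ j ∈ Finset.range (k+1), θ ^ j := by
      rw [Finset.sum_range_succ, mul_add]
      nlinarith [mul_pos hB0 hθkpos]
    by_cases hcase : φ u - φmin ≤ T (k+1)
    · exact ⟨u, ⟨hcase, hu2.trans hsum_mono⟩, by simp; positivity⟩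
    push_neg at hcase
    set μ : ℝ := c * (T (k+1)) ^ α with hμdef
    have hμpos : 0 < μ := mul_pos hc (Real.rpow_pos_of_pos (hT0 _) _)
    set r : ℝ := φ u - φmin with hrdef
    have hr0 : 0 < r := (hT0 (k+1)).trans hcase
    set R : ℝ := r / μ with hRdef
    have hR0 : 0 < R := div_pos hr0 hμpos
    set ψ : Euc n → ℝ := fun z => φ z + μ * ‖z - u‖ with hψdef
    have hψcont : Continuous ψ := by
      apply hcont.add
      exact continuous_const.mul ((continuous_id.sub continuous_const).norm)
    have hψconv : ConvexOn ℝ univ ψ := hconv.add (norm_convex_aux u μ hμpos.le)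
    obtain ⟨w, hwK, hwmin⟩ := (isCompact_closedBall u (R+1)).exists_isMinOn
      ⟨u, mem_closedBall_self (by linarith)⟩ hψcont.continuousOn
    have hψwu : ψ w ≤ φ u := by
      have := hwmin (mem_closedBall_self (by linarith : (0:ℝ) ≤ R+1))
      simpa [hψdef] using this
    have hφw_le : φ w ≤ φ u := by
      have h1 : 0 ≤ μ * ‖w - u‖ := by positivity
      have : φ w + μ * ‖w - u‖ ≤ φ u := hψwu
      linarith
    have hwu : ‖w - u‖ ≤ R := by
      have h1 : φ w + μ * ‖w - u‖ ≤ φ u := hψwu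
      have h2 : φmin ≤ φ w := hmin w
      rw [hRdef, le_div_iff₀ hμpos]
      have : μ * ‖w - u‖ ≤ r := by rw [hrdef]; linarith
      linarith [this]
    have hglobal : ∀ y, ψ w ≤ ψ y := by
      intro y
      rcases eq_or_ne y w with rfl | hyw
      · exact le_refl _
      have hgap : 0 < (R + 1) - ‖w - u‖ := by linarith
      set gap := (R + 1) - ‖w - u‖ with hgapdef
      set s : ℝ := min (gap / (‖y - w‖ + 1)) 1 with hsdef
      have hyw0 : 0 < ‖y - w‖ := by rw [norm_pos_iff, sub_ne_zero]; exact hyw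
      have hs0 : 0 < s := lt_min (by positivity) one_pos
      have hs1 : s ≤ 1 := min_le_right _ _
      have hsg : s * ‖y - w‖ < gap := by
        calc s * ‖y - w‖ ≤ gap / (‖y - w‖ + 1) * ‖y - w‖ :=
              mul_le_mul_of_nonneg_right (min_le_left _ _) (norm_nonneg _)
          _ < gap := by
              rw [div_mul_eq_mul_div, div_lt_iff₀ (by linarith)]
              nlinarith
      set z : Euc n := w + s • (y - w) with hzdef
      have hz2 : z = (1 - s) • w + s • y := by rw [hzdef]; module
      have hzK : z ∈ Metric.closedBall u (R + 1) := by
        rw [Metric.mem_closedBall, dist_eq_norm]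
        have : z - u = (w - u) + s • (y - w) := by rw [hzdef]; abel
        rw [this]
        calc ‖(w - u) + s • (y - w)‖ ≤ ‖w - u‖ + ‖s • (y - w)‖ := norm_add_le _ _
          _ = ‖w - u‖ + s * ‖y - w‖ := by
              rw [norm_smul, Real.norm_eq_abs, abs_of_pos hs0]
          _ ≤ R + 1 := by rw [hgapdef] at hsg; linarith
      have h1 : ψ w ≤ ψ z := hwmin hzK
      have h2 : ψ z ≤ (1 - s) * ψ w + s * ψ y := by
        rw [hz2]
        simpa using hψconv.2 (mem_univ w) (mem_univ y) (by linarith) hs0.le (by ring)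
      nlinarith
    have htrans : ∀ y, φ w ≤ φ y + μ * ‖y - w‖ := by
      intro y
      have h1 := hglobal y
      have htri : ‖y - u‖ ≤ ‖y - w‖ + ‖w - u‖ := by
        have := dist_triangle y w u
        simpa [dist_eq_norm] using this
      simp only [hψdef] at h1
      nlinarith
    obtain ⟨ζ, hζ, hζn⟩ := exists_small_subgrad φ hconv hcont w μ hμpos.le htrans
    have hRB : R ≤ B * θ ^ k := by
      rw [hRdef, ← hstepval k]
      exact (div_le_div_iff_of_pos_right hμpos).mpr hu1
    have hval : φ w - φmin ≤ T (k+1) := by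
      by_contra hgt
      push_neg at hgt
      have hwx : ‖w - xbar‖ ≤ ρ' := by
        have htri : ‖w - xbar‖ ≤ ‖w - u‖ + ‖u - xbar‖ := by
          have := dist_triangle w u xbar
          simpa [dist_eq_norm] using this
        have hsum : ∑ j ∈ Finset.range (k+1), θ ^ j ≤ (1 - θ)⁻¹ := hgeo (k+1)
        rw [Finset.sum_range_succ] at hsum
        have hmul := mul_le_mul_of_nonneg_left hsum hB0.le
        rw [mul_add] at hmul
        linarith [hu2, hwu, hRB]
      have hlt : φ w - φmin < a := by
        have := hTle k
        linarith
      have hKL := hKLb w hwx ((hT0 (k+1)).trans hgt) hlt ζ hζ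
      have hmono : (T (k+1)) ^ α < (φ w - φmin) ^ α :=
        Real.rpow_lt_rpow (hT0 (k+1)).le hgt hα0
      have : μ < c * (φ w - φmin) ^ α := by
        rw [hμdef]
        exact (mul_lt_mul_iff_right₀ hc).mpr hmono
      linarith
    refine ⟨w, ⟨hval, ?_⟩, hwu.trans hRB⟩
    have htri : ‖w - xbar‖ ≤ ‖w - u‖ + ‖u - xbar‖ := by
      have := dist_triangle w u xbar
      simpa [dist_eq_norm] using this
    rw [Finset.sum_range_succ, mul_add]
    linarith [hu2, hwu, hRB]
  choose! F hF1 hF2 using hstep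
  set seq : ℕ → Euc n := iterSeq F x with hseqdef
  have hInv : ∀ k, Inv k (seq k) := by
    intro k
    induction k with
    | zero =>
        constructor
        · show φ x - φmin ≤ T 0
          simp [hTdef]
          linarith [ht0def]
        · show ‖x - xbar‖ ≤ ρ₀ + B * ∑ j ∈ Finset.range 0, θ ^ j
          simpa using hx
    | succ k ih =>
        have : seq (k+1) = F k (seq k) := iterSeq_succ F x k
        rw [this]
        exact hF1 k (seq k) ih
  have hstepb : ∀ k, dist (seq k) (seq (k+1)) ≤ B * θ ^ k := by
    intro k
    rw [dist_eq_norm, norm_sub_rev]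
    have : seq (k+1) = F k (seq k) := iterSeq_succ F x k
    rw [this]
    exact hF2 k (seq k) (hInv k)
  have hcauchy : CauchySeq seq := cauchySeq_of_le_geometric θ B hθ1 hstepb
  obtain ⟨y, hy⟩ := cauchySeq_tendsto_of_complete hcauchy
  refine ⟨y, ?_, ?_⟩
  · have hφlim : Tendsto (fun k => φ (seq k)) atTop (𝓝 (φ y)) :=
      (hcont.continuousAt.tendsto).comp hy
    have hTlim : Tendsto (fun k => φmin + T k) atTop (𝓝 (φmin + 0)) := by
      apply tendsto_const_nhds.add
      have : Tendsto (fun k : ℕ => (2:ℝ)⁻¹ ^ k) atTop (𝓝 0) :=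
        tendsto_pow_atTop_nhds_zero_of_lt_one (by norm_num) (by norm_num)
      simpa [hTdef] using this.const_mul t0
    have hle : φ y ≤ φmin + 0 :=
      le_of_tendsto_of_tendsto' hφlim hTlim fun k => by linarith [(hInv k).1]
    have := hmin y
    linarith
  · have hd := dist_le_of_le_geometric_of_tendsto₀ θ B hθ1 hstepb hy
    have hseq0 : seq 0 = x := rfl
    rw [hseq0, dist_eq_norm] at hd
    calc ‖x - y‖ ≤ B / (1 - θ) := hd
      _ = (2:ℝ) ^ α / c * t0 ^ (1 - α) * (1 - θ)⁻¹ := by rw [hBdef, div_eq_mul_inv]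

end EB

/-- KL exponent of the extended objective of a multiply constrained
convex problem deduced from its Lagrangian, under strict complementarity. -/
theorem stmt15 {n m : ℕ} (q : Fin m → ℕ) (P1 : Euc n → ℝ)
    (A : ∀ i, Euc n →L[ℝ] Euc (q i)) (l : ∀ i, Euc (q i) → ℝ)
    (hP1conv : ConvexOn ℝ univ P1) (hP1cont : Continuous P1)
    (hl : ∀ i, StrictConvexOn ℝ univ (l i))
    (α : ℝ) (hα0 : 0 < α) (hα1 : α < 1)
    (xbar : Euc n) (hxbar_feas : ∀ i, l i (A i xbar) ≤ 0)
    (hxbar_min : ∀ z, (∀ i, l i (A i z) ≤ 0) → P1 xbar ≤ P1 z)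
    (lam : Fin m → ℝ) (hlam : ∀ i, 0 ≤ lam i)
    (hmult : ∀ z, P1 xbar ≤ P1 z + ∑ i, lam i * l i (A i z))
    (hKL : ∀ x, (LimSubdiff
        (fun z => ((P1 z + ∑ i, lam i * l i (A i z) : ℝ) : EReal)) x).Nonempty →
      KLExpAt (fun z => ((P1 z + ∑ i, lam i * l i (A i z) : ℝ) : EReal)) α x)
    (hsc : ∀ i, lam i = 0 → l i (A i xbar) < 0) :
    KLExpAt
      (fun z : Euc n =>
        if ∀ i, l i (A i z) ≤ 0 then ((P1 z : ℝ) : EReal) else ⊤) α xbar := by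
  classical
  set Lf : Euc n → ℝ := fun z => P1 z + ∑ i, lam i * l i (A i z) with hLfdef
  have hlconv : ∀ i, ConvexOn ℝ univ (l i) := fun i => (hl i).convexOn
  have hlcont : ∀ i, Continuous (l i) := fun i =>
    continuousOn_univ.mp ((hlconv i).continuousOn isOpen_univ)
  have hLconv : ConvexOn ℝ univ Lf := by
    refine ⟨convex_univ, fun x1 _ y1 _ a b ha hb hab => ?_⟩
    have hP := hP1conv.2 (mem_univ x1) (mem_univ y1) ha hb hab
    simp only [smul_eq_mul] at hP
    have hsum : ∑ i, lam i * l i (A i (a • x1 + b • y1))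
        ≤ a * ∑ i, lam i * l i (A i x1) + b * ∑ i, lam i * l i (A i y1) := by
      rw [Finset.mul_sum, Finset.mul_sum, ← Finset.sum_add_distrib]
      apply Finset.sum_le_sum
      intro i _
      have hAi : A i (a • x1 + b • y1) = a • A i x1 + b • A i y1 := by
        rw [map_add, map_smul, map_smul]
      have hci := (hlconv i).2 (mem_univ (A i x1)) (mem_univ (A i y1)) ha hb hab
      simp only [smul_eq_mul] at hci
      rw [hAi]
      calc lam i * l i (a • A i x1 + b • A i y1)
          ≤ lam i * (a * l i (A i x1) + b * l i (A i y1)) :=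
            mul_le_mul_of_nonneg_left hci (hlam i)
        _ = a * (lam i * l i (A i x1)) + b * (lam i * l i (A i y1)) := by ring
    simp only [hLfdef, smul_eq_mul]
    linarith
  have hLcont : Continuous Lf := by
    apply hP1cont.add
    apply continuous_finset_sum
    intro i _
    exact continuous_const.mul ((hlcont i).comp (A i).continuous)
  have hterm_nonpos : ∀ i : Fin m, lam i * l i (A i xbar) ≤ 0 := fun i =>
    mul_nonpos_iff.mpr (Or.inl ⟨hlam i, hxbar_feas i⟩)
  have hsum0 : ∑ i, lam i * l i (A i xbar) = 0 := by
    have h1 : ∑ i, lam i * l i (A i xbar) ≤ 0 :=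
      Finset.sum_nonpos fun i _ => hterm_nonpos i
    have h2 := hmult xbar
    linarith
  have hLxbar : Lf xbar = P1 xbar := by rw [hLfdef]; simp [hsum0]
  have hLlb : ∀ z, P1 xbar ≤ Lf z := hmult
  have hargmin : ∀ w, Lf w ≤ P1 xbar →
      (∀ i, lam i ≠ 0 → A i w = A i xbar) ∧ P1 w = P1 xbar := by
    intro w hw
    have hkey : ∀ i, lam i ≠ 0 → A i w = A i xbar := by
      by_contra hcon
      push_neg at hcon
      obtain ⟨j, hj0, hjne⟩ := hcon
      have hjpos : 0 < lam j := (hlam j).lt_of_ne (Ne.symm hj0)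
      set mid : Euc n := (2⁻¹:ℝ) • w + (2⁻¹:ℝ) • xbar with hmiddef
      have hPmid : P1 mid ≤ 2⁻¹ * P1 w + 2⁻¹ * P1 xbar := by
        have := hP1conv.2 (mem_univ w) (mem_univ xbar)
          (by norm_num : (0:ℝ) ≤ 2⁻¹) (by norm_num : (0:ℝ) ≤ 2⁻¹) (by norm_num)
        simpa [smul_eq_mul] using this
      have hAmid : ∀ i, A i mid = (2⁻¹:ℝ) • A i w + (2⁻¹:ℝ) • A i xbar := by
        intro i; rw [hmiddef, map_add, map_smul, map_smul]
      have hmid_i : ∀ i, lam i * l i (A i mid)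
          ≤ 2⁻¹ * (lam i * l i (A i w)) + 2⁻¹ * (lam i * l i (A i xbar)) := by
        intro i
        have hci := (hlconv i).2 (mem_univ (A i w)) (mem_univ (A i xbar))
          (by norm_num : (0:ℝ) ≤ 2⁻¹) (by norm_num : (0:ℝ) ≤ 2⁻¹) (by norm_num)
        simp only [smul_eq_mul] at hci
        rw [hAmid i]
        calc lam i * l i ((2⁻¹:ℝ) • A i w + (2⁻¹:ℝ) • A i xbar)
            ≤ lam i * (2⁻¹ * l i (A i w) + 2⁻¹ * l i (A i xbar)) :=
              mul_le_mul_of_nonneg_left hci (hlam i)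
          _ = 2⁻¹ * (lam i * l i (A i w)) + 2⁻¹ * (lam i * l i (A i xbar)) := by ring
      have hmid_j : lam j * l j (A j mid)
          < 2⁻¹ * (lam j * l j (A j w)) + 2⁻¹ * (lam j * l j (A j xbar)) := by
        have hcj := (hl j).2 (mem_univ (A j w)) (mem_univ (A j xbar)) hjne
          (by norm_num : (0:ℝ) < 2⁻¹) (by norm_num : (0:ℝ) < 2⁻¹) (by norm_num)
        simp only [smul_eq_mul] at hcj
        rw [hAmid j]
        calc lam j * l j ((2⁻¹:ℝ) • A j w + (2⁻¹:ℝ) • A j xbar)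
            < lam j * (2⁻¹ * l j (A j w) + 2⁻¹ * l j (A j xbar)) :=
              (mul_lt_mul_iff_right₀ hjpos).mpr hcj
          _ = 2⁻¹ * (lam j * l j (A j w)) + 2⁻¹ * (lam j * l j (A j xbar)) := by ring
      have hsumlt : ∑ i, lam i * l i (A i mid)
          < 2⁻¹ * (∑ i, lam i * l i (A i w)) + 2⁻¹ * (∑ i, lam i * l i (A i xbar)) := by
        have := Finset.sum_lt_sum (fun i _ => hmid_i i) ⟨j, Finset.mem_univ j, hmid_j⟩
        calc ∑ i, lam i * l i (A i mid)
            < ∑ i, (2⁻¹ * (lam i * l i (A i w)) + 2⁻¹ * (lam i * l i (A i xbar))) := this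
          _ = 2⁻¹ * (∑ i, lam i * l i (A i w)) + 2⁻¹ * (∑ i, lam i * l i (A i xbar)) := by
              rw [Finset.sum_add_distrib, ← Finset.mul_sum, ← Finset.mul_sum]
      have hLmid : Lf mid < P1 xbar := by
        have e1 : Lf mid = P1 mid + ∑ i, lam i * l i (A i mid) := rfl
        have e2 : Lf w = P1 w + ∑ i, lam i * l i (A i w) := rfl
        rw [hLfdef] at hw
        simp only at hw
        rw [e1]
        have := hsum0
        nlinarith [hPmid, hsumlt]
      exact absurd (hLlb mid) (not_le.mpr hLmid)
    refine ⟨hkey, ?_⟩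
    have hsum_w : ∑ i, lam i * l i (A i w) = 0 := by
      calc ∑ i, lam i * l i (A i w) = ∑ i, lam i * l i (A i xbar) := by
            apply Finset.sum_congr rfl
            intro i _
            by_cases h0 : lam i = 0
            · rw [h0]; ring
            · rw [hkey i h0]
        _ = 0 := hsum0
    have hw' : Lf w = P1 w := by rw [hLfdef]; simp [hsum_w]
    have h2 := hmult w
    rw [hsum_w, add_zero] at h2
    rw [hw'] at hw
    linarith
  -- strict inactivity region
  set S : Fin m → Set (Euc n) := fun i => {z | lam i = 0 → l i (A i z) < 0} with hSdef
  have hSopen : ∀ i, IsOpen (S i) := by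
    intro i
    by_cases h0 : lam i = 0
    · have he : S i = {z | l i (A i z) < 0} := by ext z; simp [hSdef, h0]
      rw [he]
      exact isOpen_lt ((hlcont i).comp (A i).continuous) continuous_const
    · have he : S i = univ := by ext z; simp [hSdef, h0]
      rw [he]; exact isOpen_univ
  have hxbarS : xbar ∈ ⋂ i, S i := mem_iInter.mpr fun i h0 => hsc i h0
  obtain ⟨ρ₂', hρ₂'pos, hball₂⟩ :=
    Metric.isOpen_iff.mp (isOpen_iInter_of_finite hSopen) xbar hxbarS
  set ρ₂ : ℝ := ρ₂' / 2 with hρ₂def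
  have hρ₂pos : 0 < ρ₂ := by positivity
  have hcball₂ : Metric.closedBall xbar ρ₂ ⊆ ⋂ i, S i :=
    (Metric.closedBall_subset_ball (by linarith)).trans hball₂
  -- KL for the Lagrangian
  have hLF_eq : (fun z : Euc n => ((P1 z + ∑ i, lam i * l i (A i z) : ℝ) : EReal))
      = (fun z => ((Lf z : ℝ) : EReal)) := rfl
  rw [hLF_eq] at hKL
  have hhL1 : ∀ z : Euc n, (fun _ : Euc n => True) z →
      ((Lf z : ℝ) : EReal) = ((Lf z : ℝ) : EReal) := fun z _ => rfl
  have hhL2 : ∀ z : Euc n, ¬ (fun _ : Euc n => True) z →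
      ((Lf z : ℝ) : EReal) = ⊤ := fun z hz => absurd trivial hz
  have hKLx : KLExpAt (fun z => ((Lf z : ℝ) : EReal)) α xbar := by
    apply hKL
    obtain ⟨u0, hu0⟩ := exists_subgrad Lf hLconv hLcont xbar
    exact ⟨u0, conv_to_lim (φ := Lf) (p := fun _ : Euc n => True) hhL1 hhL2 trivial (fun y _ => hu0 y)⟩
  unfold KLExpAt at hKLx
  obtain ⟨a₀, ha₀, aL, haL, V, hV, hprop⟩ := hKLx
  obtain ⟨ρ₁, hρ₁pos, hball₁⟩ := Metric.mem_nhds_iff.mp hV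
  have hKpos : 0 < a₀ * (1 - α) := mul_pos ha₀ (by linarith)
  set c : ℝ := (a₀ * (1 - α))⁻¹ with hcdef
  have hcpos : 0 < c := inv_pos.mpr hKpos
  have hKLb : ∀ w, ‖w - xbar‖ ≤ ρ₁/2 → 0 < Lf w - P1 xbar → Lf w - P1 xbar < aL →
      ∀ ζ ∈ ConvexSubdiff Lf w, c * (Lf w - P1 xbar) ^ α ≤ ‖ζ‖ := by
    intro w hw hpos hlt ζ hζ
    have hwV : w ∈ V := hball₁ (by rw [Metric.mem_ball, dist_eq_norm]; linarith)
    have h1 : ((Lf xbar : ℝ) : EReal) < ((Lf w : ℝ) : EReal) := by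
      rw [EReal.coe_lt_coe_iff, hLxbar]; linarith
    have h2 : ((Lf w : ℝ) : EReal) < ((Lf xbar : ℝ) : EReal) + (aL : EReal) := by
      rw [← EReal.coe_add, EReal.coe_lt_coe_iff, hLxbar]; linarith
    have hineq := hprop w hwV h1 h2
    simp only [EReal.toReal_coe, hLxbar] at hineq
    set t : ℝ := Lf w - P1 xbar with htdef
    have htα : 0 < t ^ α := Real.rpow_pos_of_pos hpos α
    rw [Real.rpow_neg hpos.le] at hineq
    have hζlim : ζ ∈ LimSubdiff (fun z => ((Lf z : ℝ) : EReal)) w :=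
      conv_to_lim (φ := Lf) (p := fun _ : Euc n => True) hhL1 hhL2 trivial (fun y _ => hζ y)
    have hDle := infDist_le_dist_of_mem (x := (0 : Euc n)) hζlim
    rw [dist_zero_left] at hDle
    set D := infDist 0 (LimSubdiff (fun z => ((Lf z : ℝ) : EReal)) w) with hDdef
    have hD0 : (0:ℝ) ≤ D := infDist_nonneg
    have h3 : t ^ α ≤ (a₀ * (1 - α)) * D := by
      have h4 := mul_le_mul_of_nonneg_left hineq htα.le
      calc t ^ α = t ^ α * 1 := (mul_one _).symm
        _ ≤ t ^ α * (a₀ * (1 - α) * (t ^ α)⁻¹ * D) := h4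
        _ = a₀ * (1 - α) * D * (t ^ α * (t ^ α)⁻¹) := by ring
        _ = a₀ * (1 - α) * D := by rw [mul_inv_cancel₀ htα.ne', mul_one]
    calc c * t ^ α ≤ c * ((a₀ * (1 - α)) * D) := mul_le_mul_of_nonneg_left h3 hcpos.le
      _ = D := by rw [hcdef, inv_mul_cancel_left₀ hKpos.ne']
      _ ≤ ‖ζ‖ := hDle
  -- constants
  set θ : ℝ := (2:ℝ) ^ (α - 1) with hθdef
  have hθ1 : θ < 1 := Real.rpow_lt_one_of_one_lt_of_neg one_lt_two (by linarith)
  have hθ0 : 0 < θ := Real.rpow_pos_of_pos two_pos _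
  set C0 : ℝ := (2:ℝ) ^ α / c * (1 - θ)⁻¹ with hC0def
  have hC0pos : 0 < C0 :=
    mul_pos (div_pos (Real.rpow_pos_of_pos two_pos _) hcpos) (inv_pos.mpr (by linarith))
  set mρ : ℝ := min (ρ₁ / 4) (ρ₂ / 2) with hmρdef
  have hmρpos : 0 < mρ := lt_min (by linarith) (by linarith)
  set δ : ℝ := (mρ / C0) ^ ((1 - α)⁻¹ : ℝ) with hδdef
  have hδpos : 0 < δ := Real.rpow_pos_of_pos (div_pos hmρpos hC0pos) _
  have hδval : C0 * δ ^ (1 - α) = mρ := by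
    have e : δ ^ (1 - α) = mρ / C0 := by
      rw [hδdef, ← Real.rpow_mul (div_pos hmρpos hC0pos).le,
        inv_mul_cancel₀ (by linarith : (1:ℝ) - α ≠ 0), Real.rpow_one]
    rw [e]
    field_simp
  set aF : ℝ := min aL δ with haFdef
  have haFpos : 0 < aF := lt_min haL hδpos
  unfold KLExpAt
  refine ⟨C0 / (1 - α), div_pos hC0pos (by linarith), aF, haFpos,
    Metric.ball xbar mρ, Metric.ball_mem_nhds _ hmρpos, ?_⟩
  intro x hxball h1 h2
  by_cases hpx : ∀ i, l i (A i x) ≤ 0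
  swap
  · exfalso
    simp only [if_neg hpx, if_pos hxbar_feas] at h2
    rw [← EReal.coe_add] at h2
    exact not_top_lt h2
  simp only [if_pos hpx, if_pos hxbar_feas] at h1 h2 ⊢
  rw [EReal.coe_lt_coe_iff] at h1
  rw [← EReal.coe_add, EReal.coe_lt_coe_iff] at h2
  rw [EReal.toReal_coe, EReal.toReal_coe]
  set t : ℝ := P1 x - P1 xbar with htdef
  have ht : 0 < t := by rw [htdef]; linarith
  have htaF : t < aF := by rw [htdef]; linarith
  set tL : ℝ := Lf x - P1 xbar with htLdef
  have htL_le : tL ≤ t := by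
    have hsn : ∑ i, lam i * l i (A i x) ≤ 0 :=
      Finset.sum_nonpos fun i _ => mul_nonpos_iff.mpr (Or.inl ⟨hlam i, hpx i⟩)
    have e : Lf x = P1 x + ∑ i, lam i * l i (A i x) := rfl
    rw [htLdef, htdef, e]
    linarith
  have htLpos : 0 < tL := by
    rcases lt_or_ge 0 tL with h | h
    · exact h
    · exfalso
      have h5 := (hargmin x (by rw [htLdef] at h; linarith)).2
      rw [htdef] at ht
      linarith
  have htLaL : tL < aL := lt_of_le_of_lt htL_le (lt_of_lt_of_le htaF (min_le_left _ _))
  have htLδ : tL < δ := lt_of_le_of_lt htL_le (lt_of_lt_of_le htaF (min_le_right _ _))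
  have hCtL : C0 * tL ^ (1 - α) ≤ mρ := by
    have h5 : tL ^ (1 - α) ≤ δ ^ (1 - α) :=
      Real.rpow_le_rpow htLpos.le htLδ.le (by linarith)
    calc C0 * tL ^ (1 - α) ≤ C0 * δ ^ (1 - α) := mul_le_mul_of_nonneg_left h5 hC0pos.le
      _ = mρ := hδval
  have hxnorm : ‖x - xbar‖ ≤ mρ := by
    have h5 := Metric.mem_ball.mp hxball
    rw [dist_eq_norm] at h5
    linarith
  have hCe : (2:ℝ) ^ α / c * tL ^ (1 - α) * (1 - θ)⁻¹ = C0 * tL ^ (1 - α) := by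
    rw [hC0def]; ring
  obtain ⟨y, hyval, hyd⟩ := error_bound Lf hLconv hLcont xbar (P1 xbar) hLlb α c aL (ρ₁/2)
    hα0 hα1 hcpos hKLb x mρ hxnorm htLpos htLaL
    (by rw [hCe]; have := min_le_left (ρ₁/4) (ρ₂/2); linarith [hCtL])
  rw [hCe] at hyd
  have hxy : ‖x - y‖ ≤ C0 * t ^ (1 - α) := by
    have h5 : tL ^ (1 - α) ≤ t ^ (1 - α) :=
      Real.rpow_le_rpow htLpos.le htL_le (by linarith)
    calc ‖x - y‖ ≤ C0 * tL ^ (1 - α) := hyd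
      _ ≤ C0 * t ^ (1 - α) := mul_le_mul_of_nonneg_left h5 hC0pos.le
  have hyLf : Lf y ≤ P1 xbar := le_of_eq hyval
  have hP1y : P1 y = P1 xbar := (hargmin y hyLf).2
  have hAy : ∀ i, lam i ≠ 0 → A i y = A i xbar := (hargmin y hyLf).1
  have hyball : y ∈ Metric.closedBall xbar ρ₂ := by
    rw [Metric.mem_closedBall, dist_eq_norm]
    have htri : ‖y - xbar‖ ≤ ‖y - x‖ + ‖x - xbar‖ := by
      have := dist_triangle y x xbar
      simpa [dist_eq_norm] using this
    have hrev : ‖y - x‖ = ‖x - y‖ := norm_sub_rev _ _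
    have h7 : ‖x - y‖ ≤ mρ := hyd.trans hCtL
    have := min_le_right (ρ₁/4) (ρ₂/2)
    linarith
  have hyfeas : ∀ i, l i (A i y) ≤ 0 := by
    intro i
    by_cases h0 : lam i = 0
    · have h5 := hcball₂ hyball
      rw [mem_iInter] at h5
      exact (h5 i h0).le
    · rw [hAy i h0]; exact hxbar_feas i
  -- convexity and closedness of the feasible set
  have hpconv : Convex ℝ {z : Euc n | ∀ i, l i (A i z) ≤ 0} := by
    intro z1 hz1 z2 hz2 a b ha hb hab
    intro i
    have hAi : A i (a • z1 + b • z2) = a • A i z1 + b • A i z2 := by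
      rw [map_add, map_smul, map_smul]
    have hci := (hlconv i).2 (mem_univ (A i z1)) (mem_univ (A i z2)) ha hb hab
    simp only [smul_eq_mul] at hci
    calc l i (A i (a • z1 + b • z2)) = l i (a • A i z1 + b • A i z2) := by rw [hAi]
      _ ≤ a * l i (A i z1) + b * l i (A i z2) := hci
      _ ≤ 0 := add_nonpos (mul_nonpos_iff.mpr (Or.inl ⟨ha, hz1 i⟩))
            (mul_nonpos_iff.mpr (Or.inl ⟨hb, hz2 i⟩))
  have hpcl : IsClosed {z : Euc n | ∀ i, l i (A i z) ≤ 0} := by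
    have he : {z : Euc n | ∀ i, l i (A i z) ≤ 0} = ⋂ i, {z | l i (A i z) ≤ 0} := by
      ext z; simp [mem_iInter]
    rw [he]
    exact isClosed_iInter fun i =>
      isClosed_le ((hlcont i).comp (A i).continuous) continuous_const
  have hhF1 : ∀ z : Euc n, (∀ i, l i (A i z) ≤ 0) →
      (if ∀ i, l i (A i z) ≤ 0 then ((P1 z : ℝ) : EReal) else ⊤) = ((P1 z : ℝ) : EReal) :=
    fun z hz => if_pos hz
  have hhF2 : ∀ z : Euc n, ¬ (∀ i, l i (A i z) ≤ 0) →
      (if ∀ i, l i (A i z) ≤ 0 then ((P1 z : ℝ) : EReal) else ⊤) = ⊤ :=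
    fun z hz => if_neg hz
  have hSsub : ∀ ζ ∈ LimSubdiff
      (fun z : Euc n => if ∀ i, l i (A i z) ≤ 0 then ((P1 z : ℝ) : EReal) else ⊤) x,
      t ^ α / C0 ≤ ‖ζ‖ := by
    intro ζ hζ
    obtain ⟨_, hsub⟩ := lim_subset (φ := P1) (p := fun z => ∀ i, l i (A i z) ≤ 0)
      hpconv hpcl hP1conv hP1cont hhF1 hhF2 hζ
    have h5 := hsub y hyfeas
    rw [hP1y] at h5
    have h6 : t ≤ ⟪ζ, x - y⟫ := by
      have he : ⟪ζ, x - y⟫ = -⟪ζ, y - x⟫ := by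
        rw [show x - y = -(y - x) by abel, inner_neg_right]
      rw [he, htdef]
      linarith
    have h7 := real_inner_le_norm ζ (x - y)
    have h8 : t ≤ ‖ζ‖ * (C0 * t ^ (1 - α)) := by
      calc t ≤ ⟪ζ, x - y⟫ := h6
        _ ≤ ‖ζ‖ * ‖x - y‖ := h7
        _ ≤ ‖ζ‖ * (C0 * t ^ (1 - α)) := mul_le_mul_of_nonneg_left hxy (norm_nonneg _)
    have hpow : 0 < t ^ ((1:ℝ) - α) := Real.rpow_pos_of_pos ht _
    have htexp : t ^ α * t ^ (1 - α) = t := by rw [← Real.rpow_add ht]; norm_num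
    rw [div_le_iff₀ hC0pos]
    have h9 : t ^ α * t ^ (1 - α) ≤ (‖ζ‖ * C0) * t ^ (1 - α) := by
      rw [htexp]
      calc t ≤ ‖ζ‖ * (C0 * t ^ (1 - α)) := h8
        _ = (‖ζ‖ * C0) * t ^ (1 - α) := by ring
    exact le_of_mul_le_mul_right h9 hpow
  obtain ⟨ζ0, hζ0⟩ := exists_subgrad P1 hP1conv hP1cont x
  have hζ0mem : ζ0 ∈ LimSubdiff
      (fun z : Euc n => if ∀ i, l i (A i z) ≤ 0 then ((P1 z : ℝ) : EReal) else ⊤) x :=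
    conv_to_lim (φ := P1) (p := fun z => ∀ i, l i (A i z) ≤ 0) hhF1 hhF2 hpx
      (fun y' _ => hζ0 y')
  have hDge : t ^ α / C0 ≤ infDist 0 (LimSubdiff
      (fun z : Euc n => if ∀ i, l i (A i z) ≤ 0 then ((P1 z : ℝ) : EReal) else ⊤) x) := by
    by_contra hcon
    push_neg at hcon
    obtain ⟨z, hz, hdz⟩ := (infDist_lt_iff ⟨ζ0, hζ0mem⟩).mp hcon
    rw [dist_zero_left] at hdz
    exact absurd (hSsub z hz) (not_le.mpr hdz)
  have hids : C0 / (1 - α) * (1 - α) = C0 :=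
    div_mul_cancel₀ _ (by linarith : (1:ℝ) - α ≠ 0)
  rw [hids, Real.rpow_neg ht.le]
  have htαpos : 0 < t ^ α := Real.rpow_pos_of_pos ht α
  calc (1:ℝ) = C0 * (t ^ α)⁻¹ * (t ^ α / C0) := by
        field_simp
    _ ≤ C0 * (t ^ α)⁻¹ * infDist 0 (LimSubdiff
        (fun z : Euc n => if ∀ i, l i (A i z) ≤ 0 then ((P1 z : ℝ) : EReal) else ⊤) x) :=
      mul_le_mul_of_nonneg_left hDge (by positivity)
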